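/- Let Δ ≥ 1, r ≥ 1 and f ∈ ℤ^r such that the matrix [I_r | D_r | f] is Δ-modular, where D_r has columns e_i − e_j for 1 ≤ i < j ≤ r. Then f can be written as an integer linear combination of at most Δ columns of [I_r | D_r]. -/

import Mathlib

/-- The matrix `[I_r | D_r | f]`, where `D_r` has columns `eᵢ − eⱼ` for `i < j`. -/
def cliqueExtMatrix (r : ℕ) (f : Fin r → ℤ) :
    Matrix (Fin r) (Fin r ⊕ {p : Fin r × Fin r // p.1 < p.2} ⊕ Unit) ℤ :=
  Matrix.of fun i j =>
    match j with
    | Sum.inl k => if i = k then 1 else 0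
    | Sum.inr (Sum.inl p) => (if i = p.1.1 then 1 else 0) - (if i = p.1.2 then 1 else 0)
    | Sum.inr (Sum.inr _) => f i


section Aux
open Finset
variable {r : ℕ}


def IsForm (r : ℕ) (v : Fin r → ℤ) : Prop :=
  (∃ i : Fin r, v = Pi.single i 1) ∨
    (∃ i j : Fin r, i < j ∧ v = Pi.single i 1 - Pi.single j 1)

def posSum (f : Fin r → ℤ) : ℕ := ∑ i, (f i).toNat
def negSum (f : Fin r → ℤ) : ℕ := ∑ i, (-f i).toNat

lemma list_to_finset : ∀ (L : List ((Fin r → ℤ) × ℤ)), (∀ p ∈ L, IsForm r p.1) →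
    ∃ (s : Finset (Fin r → ℤ)) (c : (Fin r → ℤ) → ℤ),
      s.card ≤ L.length ∧ (∀ v ∈ s, IsForm r v) ∧
      (L.map fun p => p.2 • p.1).sum = ∑ v ∈ s, c v • v := by
  intro L
  induction L with
  | nil => exact fun _ => ⟨∅, 0, by simp, by simp, by simp⟩
  | cons p L ih =>
    intro hform
    obtain ⟨s, c, hcard, hmem, hsum⟩ := ih (fun q hq => hform q (List.mem_cons_of_mem _ hq))
    by_cases hv : p.1 ∈ s
    · refine ⟨s, Function.update c p.1 (c p.1 + p.2), le_trans hcard (Nat.le_succ _), hmem, ?_⟩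
      rw [List.map_cons, List.sum_cons, hsum,
        ← Finset.add_sum_erase s (fun v => Function.update c p.1 (c p.1 + p.2) v • v) hv,
        ← Finset.add_sum_erase s (fun v => c v • v) hv]
      have he : ∀ v ∈ s.erase p.1, Function.update c p.1 (c p.1 + p.2) v • v = c v • v := by
        intro v hvm
        rw [Function.update_of_ne (Finset.ne_of_mem_erase hvm)]
      rw [Finset.sum_congr rfl he, Function.update_self, add_smul]
      abel
    · refine ⟨insert p.1 s, Function.update c p.1 p.2, ?_, ?_, ?_⟩
      · simpa [Finset.card_insert_of_notMem hv] using hcard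
      · intro v hvm
        rcases Finset.mem_insert.mp hvm with rfl | h
        · exact hform p List.mem_cons_self
        · exact hmem v h
      · rw [List.map_cons, List.sum_cons, hsum, Finset.sum_insert hv,
          Function.update_self]
        congr 1
        exact Finset.sum_congr rfl fun v hvm => by
          rw [Function.update_of_ne (fun h => hv (by rwa [h] at hvm))]

lemma posSum_step (f : Fin r → ℤ) (i j : Fin r) (hi : 0 < f i) (hj : f j < 0) :
    posSum (f - Pi.single i 1 + Pi.single j 1) + 1 = posSum f ∧
    negSum (f - Pi.single i 1 + Pi.single j 1) + 1 = negSum f := by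
  have hij : i ≠ j := fun h => by rw [h] at hi; omega
  set f' : Fin r → ℤ := f - Pi.single i 1 + Pi.single j 1 with hf'
  have hfm : ∀ m, f' m = f m - (if m = i then 1 else 0) + (if m = j then 1 else 0) := by
    intro m
    simp [hf', Pi.single_apply]
  constructor
  · have key : ∀ m, (f' m).toNat + (if m = i then 1 else 0) = (f m).toNat := by
      intro m
      rw [hfm m]
      rcases eq_or_ne m i with rfl | hmi <;> rcases eq_or_ne m j with rfl | hmj <;>
        simp_all <;> omega
    unfold posSum
    calc (∑ m, (f' m).toNat) + 1
        = ∑ m, ((f' m).toNat + if m = i then 1 else 0) := by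
          rw [Finset.sum_add_distrib, Finset.sum_ite_eq' Finset.univ i (fun _ => 1)]
          simp
      _ = ∑ m, (f m).toNat := Finset.sum_congr rfl fun m _ => key m
  · have key : ∀ m, (-f' m).toNat + (if m = j then 1 else 0) = (-f m).toNat := by
      intro m
      rw [hfm m]
      rcases eq_or_ne m i with rfl | hmi <;> rcases eq_or_ne m j with rfl | hmj <;>
        simp_all <;> omega
    unfold negSum
    calc (∑ m, (-f' m).toNat) + 1
        = ∑ m, ((-f' m).toNat + if m = j then 1 else 0) := by
          rw [Finset.sum_add_distrib, Finset.sum_ite_eq' Finset.univ j (fun _ => 1)]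
          simp
      _ = ∑ m, (-f m).toNat := Finset.sum_congr rfl fun m _ => key m

lemma posSum_step_pos (f : Fin r → ℤ) (i : Fin r) (hi : 0 < f i) :
    posSum (f - Pi.single i 1) + 1 = posSum f ∧
    negSum (f - Pi.single i 1) = negSum f := by
  set f' : Fin r → ℤ := f - Pi.single i 1 with hf'
  have hfm : ∀ m, f' m = f m - (if m = i then 1 else 0) := by
    intro m; simp [hf', Pi.single_apply]
  constructor
  · have key : ∀ m, (f' m).toNat + (if m = i then 1 else 0) = (f m).toNat := by
      intro m; rw [hfm m]
      rcases eq_or_ne m i with rfl | hmi <;> simp_all <;> omega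
    unfold posSum
    calc (∑ m, (f' m).toNat) + 1
        = ∑ m, ((f' m).toNat + if m = i then 1 else 0) := by
          rw [Finset.sum_add_distrib, Finset.sum_ite_eq' Finset.univ i (fun _ => 1)]
          simp
      _ = ∑ m, (f m).toNat := Finset.sum_congr rfl fun m _ => key m
  · unfold negSum
    refine Finset.sum_congr rfl fun m _ => ?_
    rw [hfm m]
    rcases eq_or_ne m i with rfl | hmi <;> simp_all <;> omega

lemma posSum_step_neg (f : Fin r → ℤ) (j : Fin r) (hj : f j < 0) :
    posSum (f + Pi.single j 1) = posSum f ∧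
    negSum (f + Pi.single j 1) + 1 = negSum f := by
  set f' : Fin r → ℤ := f + Pi.single j 1 with hf'
  have hfm : ∀ m, f' m = f m + (if m = j then 1 else 0) := by
    intro m; simp [hf', Pi.single_apply]
  constructor
  · unfold posSum
    refine Finset.sum_congr rfl fun m _ => ?_
    rw [hfm m]
    rcases eq_or_ne m j with rfl | hmj <;> simp_all <;> omega
  · have key : ∀ m, (-f' m).toNat + (if m = j then 1 else 0) = (-f m).toNat := by
      intro m; rw [hfm m]
      rcases eq_or_ne m j with rfl | hmj <;> simp_all <;> omega
    unfold negSum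
    calc (∑ m, (-f' m).toNat) + 1
        = ∑ m, ((-f' m).toNat + if m = j then 1 else 0) := by
          rw [Finset.sum_add_distrib, Finset.sum_ite_eq' Finset.univ j (fun _ => 1)]
          simp
      _ = ∑ m, (-f m).toNat := Finset.sum_congr rfl fun m _ => key m

lemma decomp_list : ∀ (n : ℕ) (f : Fin r → ℤ), posSum f ≤ n → negSum f ≤ n →
    ∃ L : List ((Fin r → ℤ) × ℤ), L.length ≤ n ∧ (∀ p ∈ L, IsForm r p.1) ∧
      f = (L.map fun p => p.2 • p.1).sum := by
  intro n
  induction n with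
  | zero =>
    intro f hp hn
    refine ⟨[], by simp, by simp, ?_⟩
    have hz : ∀ m, f m = 0 := by
      intro m
      have h1 : (f m).toNat = 0 :=
        Nat.eq_zero_of_le_zero (le_trans (Finset.single_le_sum
          (f := fun m => (f m).toNat) (fun _ _ => Nat.zero_le _) (Finset.mem_univ m)) hp)
      have h2 : (-f m).toNat = 0 :=
        Nat.eq_zero_of_le_zero (le_trans (Finset.single_le_sum
          (f := fun m => (-f m).toNat) (fun _ _ => Nat.zero_le _) (Finset.mem_univ m)) hn)
      omega
    funext m
    simp [hz m]
  | succ n ih =>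
    intro f hp hn
    by_cases hi : ∃ i, 0 < f i
    · obtain ⟨i, hi⟩ := hi
      by_cases hj : ∃ j, f j < 0
      · obtain ⟨j, hj⟩ := hj
        obtain ⟨h1, h2⟩ := posSum_step f i j hi hj
        obtain ⟨L, hL, hform, hsum⟩ :=
          ih (f - Pi.single i 1 + Pi.single j 1) (by omega) (by omega)
        have hij : i ≠ j := fun h => by rw [h] at hi; omega
        rcases lt_or_gt_of_ne hij with h | h
        · refine ⟨(Pi.single i 1 - Pi.single j 1, 1) :: L, by simpa using hL,
            ?_, ?_⟩
          · intro p hp'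
            rcases List.mem_cons.mp hp' with rfl | hp'
            · exact Or.inr ⟨i, j, h, rfl⟩
            · exact hform p hp'
          · rw [List.map_cons, List.sum_cons, ← hsum]
            funext m
            simp [Pi.single_apply]
        · refine ⟨(Pi.single j 1 - Pi.single i 1, -1) :: L, by simpa using hL,
            ?_, ?_⟩
          · intro p hp'
            rcases List.mem_cons.mp hp' with rfl | hp'
            · exact Or.inr ⟨j, i, h, rfl⟩
            · exact hform p hp'
          · rw [List.map_cons, List.sum_cons, ← hsum]
            funext m
            simp [Pi.single_apply]
      · push_neg at hj
        obtain ⟨h1, h2⟩ := posSum_step_pos f i hi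
        have hneg : negSum (f - Pi.single i 1) ≤ n := by
          have : negSum f = 0 := by
            unfold negSum
            refine Finset.sum_eq_zero fun m _ => ?_
            have := hj m; omega
          omega
        obtain ⟨L, hL, hform, hsum⟩ := ih (f - Pi.single i 1) (by omega) hneg
        refine ⟨(Pi.single i 1, 1) :: L, by simpa using hL, ?_, ?_⟩
        · intro p hp'
          rcases List.mem_cons.mp hp' with rfl | hp'
          · exact Or.inl ⟨i, rfl⟩
          · exact hform p hp'
        · rw [List.map_cons, List.sum_cons, ← hsum]
          funext m
          simp [Pi.single_apply]
    · push_neg at hi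
      by_cases hj : ∃ j, f j < 0
      · obtain ⟨j, hj⟩ := hj
        obtain ⟨h1, h2⟩ := posSum_step_neg f j hj
        have hpos : posSum (f + Pi.single j 1) ≤ n := by
          have : posSum f = 0 := by
            unfold posSum
            refine Finset.sum_eq_zero fun m _ => ?_
            have := hi m; omega
          omega
        obtain ⟨L, hL, hform, hsum⟩ := ih (f + Pi.single j 1) (by omega) (by omega)
        refine ⟨(Pi.single j 1, -1) :: L, by simpa using hL, ?_, ?_⟩
        · intro p hp'
          rcases List.mem_cons.mp hp' with rfl | hp'
          · exact Or.inl ⟨j, rfl⟩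
          · exact hform p hp'
        · rw [List.map_cons, List.sum_cons, ← hsum]
          funext m
          simp [Pi.single_apply]
      · push_neg at hj
        refine ⟨[], by simp, by simp, ?_⟩
        funext m
        have := hi m; have := hj m
        simp
        omega

lemma subset_sum_bound (Δ : ℕ) (r : ℕ) (f : Fin r → ℤ)
    (hmod : ∀ g : Fin r → (Fin r ⊕ {p : Fin r × Fin r // p.1 < p.2} ⊕ Unit),
      |((cliqueExtMatrix r f).submatrix id g).det| ≤ (Δ : ℤ))
    (S : Finset (Fin r)) : |∑ i ∈ S, f i| ≤ (Δ : ℤ) := by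
  rcases S.eq_empty_or_nonempty with rfl | ⟨k, hk⟩
  · simpa using le_trans (abs_nonneg _) (hmod (fun _ => Sum.inr (Sum.inr ())))
  classical
  set σ : Fin r → ℤ := fun m => if m < k then 1 else -1 with hσ
  have hσsq : ∀ m, σ m * σ m = 1 := by
    intro m; simp only [hσ]; split_ifs <;> ring
  have hσabs : ∀ m, |σ m| = 1 := by
    intro m; simp only [hσ]; split_ifs <;> simp
  set g : Fin r → (Fin r ⊕ {p : Fin r × Fin r // p.1 < p.2} ⊕ Unit) := fun l =>
    if hlk : l = k then Sum.inr (Sum.inr ())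
    else if l ∈ S then Sum.inr (Sum.inl ⟨(min l k, max l k), min_lt_max.mpr hlk⟩)
    else Sum.inl l with hg
  set A : Matrix (Fin r) (Fin r) ℤ := (cliqueExtMatrix r f).submatrix id g with hA0
  have hA : ∀ i m, A i m = if m = k then f i
      else if m ∈ S then σ m * ((if i = m then 1 else 0) - (if i = k then 1 else 0))
      else (if i = m then 1 else 0) := by
    intro i m
    rcases eq_or_ne m k with rfl | hmk
    · simp [hA0, hg, cliqueExtMatrix, Matrix.submatrix_apply]
    by_cases hmS : m ∈ S
    · simp only [hA0, Matrix.submatrix_apply, id, hg, dif_neg hmk, if_pos hmS,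
        cliqueExtMatrix, Matrix.of_apply, if_neg hmk]
      rcases lt_or_gt_of_ne hmk with h | h
      · simp only [min_eq_left h.le, max_eq_right h.le]
        have : σ m = 1 := if_pos h
        rw [this]; ring
      · simp only [min_eq_right h.le, max_eq_left h.le]
        have : σ m = -1 := if_neg (not_lt.mpr h.le)
        rw [this]; ring
    · simp [hA0, hg, cliqueExtMatrix, Matrix.submatrix_apply, hmk, hmS]
  clear_value A g
  clear hg
  set β : Fin r → ℤ := fun m => if m ∈ S then -σ m * f m else -f m with hβ
  set E : Matrix (Fin r) (Fin r) ℤ :=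
    Matrix.of fun i l => if i = k ∧ l ∈ S.erase k then 1 else 0 with hE
  set F : Matrix (Fin r) (Fin r) ℤ :=
    Matrix.of fun m j => if j = k ∧ m ≠ k then β m else 0 with hF
  clear_value E F
  have hEE : E * E = 0 := by
    ext i j
    rw [Matrix.mul_apply]
    refine Finset.sum_eq_zero fun l _ => ?_
    show E i l * E l j = 0
    by_cases h : l ∈ S.erase k
    · have h2 : E l j = 0 := by
        rw [hE]
        exact if_neg (fun hc => (Finset.mem_erase.mp h).1 hc.1)
      rw [h2, mul_zero]
    · have h1 : E i l = 0 := by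
        rw [hE]; exact if_neg (fun hc => h hc.2)
      rw [h1, zero_mul]
  have hFF : F * F = 0 := by
    ext i j
    rw [Matrix.mul_apply]
    refine Finset.sum_eq_zero fun l _ => ?_
    show F i l * F l j = 0
    by_cases h : l = k
    · have h2 : F l j = 0 := by
        rw [hF]; exact if_neg (fun hc => hc.2 h)
      rw [h2, mul_zero]
    · have h1 : F i l = 0 := by
        rw [hF]; exact if_neg (fun hc => h hc.1)
      rw [h1, zero_mul]
  have habs : ∀ M : Matrix (Fin r) (Fin r) ℤ, M * M = 0 → |(1 + M).det| = 1 := by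
    intro M hM
    have hmul : (1 + M) * (1 - M) = 1 := by
      have : (1 + M) * (1 - M) = 1 - M * M := by noncomm_ring
      rw [this, hM, sub_zero]
    have := IsUnit.of_mul_eq_one (a := (1 + M).det) (1 - M).det
      (by rw [← Matrix.det_mul, hmul, Matrix.det_one])
    rcases Int.isUnit_iff.mp this with h | h <;> simp [h]
  set B : Matrix (Fin r) (Fin r) ℤ := (1 + E) * A with hB0
  have hB : ∀ i m, B i m =
      if i = k then (if m = k then ∑ l ∈ S, f l else 0) else A i m := by
    intro i m
    have hstep : B i m = A i m + (if i = k then ∑ l ∈ S.erase k, A l m else 0) := by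
      rw [hB0, Matrix.add_mul, Matrix.one_mul]
      show A i m + (E * A) i m = _
      congr 1
      rw [Matrix.mul_apply]
      by_cases hik : i = k
      · have hEil : ∀ l, E i l = if l ∈ S.erase k then 1 else 0 := by
          intro l; rw [hE]; exact if_congr (and_iff_right hik) rfl rfl
        rw [Finset.sum_congr rfl
          (g := fun l => if l ∈ S.erase k then A l m else 0)
          (fun l _ => by
            show E i l * A l m = if l ∈ S.erase k then A l m else 0
            rw [hEil l]
            by_cases hmem : l ∈ S.erase k
            · rw [if_pos hmem, if_pos hmem, one_mul]
            · rw [if_neg hmem, if_neg hmem, zero_mul])]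
        rw [Finset.sum_ite_mem, Finset.univ_inter, if_pos hik]
      · rw [if_neg hik]
        refine Finset.sum_eq_zero fun l _ => ?_
        have : E i l = 0 := by rw [hE]; exact if_neg (fun hc => hik hc.1)
        rw [this, zero_mul]
    rw [hstep]
    by_cases hik : i = k
    · rw [if_pos hik, if_pos hik]
      by_cases hmk : m = k
      · rw [if_pos hmk]
        have h1 : ∀ l ∈ S.erase k, A l m = f l := fun l _ => by
          rw [hA, if_pos hmk]
        rw [Finset.sum_congr rfl h1, hA, if_pos hmk, hik]
        exact Finset.add_sum_erase S f hk
      · rw [if_neg hmk]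
        by_cases hmS : m ∈ S
        · have hAlm : ∀ l, A l m =
              σ m * ((if l = m then 1 else 0) - (if l = k then 1 else 0)) := by
            intro l; rw [hA, if_neg hmk, if_pos hmS]
          rw [Finset.sum_congr rfl fun l _ => hAlm l, ← Finset.mul_sum,
            Finset.sum_sub_distrib,
            Finset.sum_ite_eq' (S.erase k) m (fun _ => (1:ℤ)),
            Finset.sum_ite_eq' (S.erase k) k (fun _ => (1:ℤ)),
            if_pos (Finset.mem_erase.mpr ⟨hmk, hmS⟩),
            if_neg (Finset.notMem_erase k S), hAlm i,
            if_neg (show ¬ i = m from fun h => hmk (hik ▸ h.symm ▸ rfl)),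
            if_pos hik]
          ring
        · have hAlm : ∀ l, A l m = if l = m then 1 else 0 := by
            intro l; rw [hA, if_neg hmk, if_neg hmS]
          rw [Finset.sum_congr rfl fun l _ => hAlm l,
            Finset.sum_ite_eq' (S.erase k) m (fun _ => (1:ℤ)),
            if_neg (fun h => hmS (Finset.mem_erase.mp h).2), hAlm i,
            if_neg (show ¬ i = m from fun h => hmk (hik ▸ h.symm ▸ rfl))]
          ring
    · rw [if_neg hik, if_neg hik, add_zero]
  set d : Fin r → ℤ := fun m =>
    if m = k then ∑ l ∈ S, f l else if m ∈ S then σ m else 1 with hd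
  have hdm : ∀ m, d m = if m = k then ∑ l ∈ S, f l
      else if m ∈ S then σ m else 1 := fun m => rfl
  have hdiag : B * (1 + F) = Matrix.diagonal d := by
    ext i j
    rw [Matrix.mul_add, Matrix.mul_one]
    show B i j + (B * F) i j = _
    by_cases hjk : j = k
    · have hFmj : ∀ m, F m j = if m = k then 0 else β m := by
        intro m
        rw [hF]
        show (if j = k ∧ m ≠ k then β m else 0) = if m = k then 0 else β m
        by_cases hmk : m = k
        · rw [if_pos hmk, if_neg (fun hc : j = k ∧ m ≠ k => hc.2 hmk)]
        · rw [if_neg hmk, if_pos (⟨hjk, hmk⟩ : j = k ∧ m ≠ k)]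
      by_cases hik : i = k
      · have hsum : (B * F) i j = 0 := by
          rw [Matrix.mul_apply]
          refine Finset.sum_eq_zero fun m _ => ?_
          rw [hFmj m]
          by_cases hmk : m = k
          · rw [if_pos hmk, mul_zero]
          · have : B i m = 0 := by rw [hB, if_pos hik, if_neg hmk]
            rw [this, zero_mul]
        rw [hsum, add_zero, hB, if_pos hik, if_pos hjk, hik, hjk,
          Matrix.diagonal_apply_eq, hd]
        simp
      · have hBi : ∀ m, B i m = A i m := fun m => by rw [hB, if_neg hik]
        have hsum : (B * F) i j = -f i := by
          rw [Matrix.mul_apply]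
          rw [Finset.sum_congr rfl (g := fun m => if i = m then -f i else 0)
            (fun m _ => ?_), Finset.sum_ite_eq Finset.univ i,
            if_pos (Finset.mem_univ i)]
          show B i m * F m j = if i = m then -f i else 0
          rw [hBi m, hFmj m]
          by_cases hmk : m = k
          · rw [if_pos hmk, mul_zero,
              if_neg (fun h : i = m => hik (h.trans hmk))]
          · rw [if_neg hmk, hA, if_neg hmk]
            by_cases hmS : m ∈ S
            · rw [if_pos hmS, hβ]
              show σ m * ((if i = m then 1 else 0) - if i = k then 1 else 0) *
                (if m ∈ S then -σ m * f m else -f m) = _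
              rw [if_pos hmS, if_neg hik]
              by_cases him : i = m
              · rw [if_pos him, if_pos him, him]
                linear_combination (-f m) * hσsq m
              · rw [if_neg him, if_neg him]; ring
            · rw [if_neg hmS, hβ]
              show (if i = m then (1:ℤ) else 0) *
                (if m ∈ S then -σ m * f m else -f m) = _
              rw [if_neg hmS]
              by_cases him : i = m
              · rw [if_pos him, if_pos him, him]; ring
              · rw [if_neg him, if_neg him]; ring
        rw [hsum, hBi j, hA, if_pos hjk,
          Matrix.diagonal_apply_ne _ (fun h : i = j => hik (h.trans hjk))]
        ring
    · have hFmj : ∀ m, F m j = 0 := by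
        intro m; rw [hF]; exact if_neg (fun hc => hjk hc.1)
      have hsum : (B * F) i j = 0 := by
        rw [Matrix.mul_apply]
        exact Finset.sum_eq_zero fun m _ => by rw [hFmj m, mul_zero]
      rw [hsum, add_zero, hB]
      by_cases hik : i = k
      · rw [if_pos hik, if_neg hjk,
          Matrix.diagonal_apply_ne _ (fun h : i = j => hjk (h.symm ▸ hik))]
      · rw [if_neg hik, hA, if_neg hjk]
        by_cases hjS : j ∈ S
        · rw [if_pos hjS]
          by_cases hij : i = j
          · rw [if_pos hij, if_neg hik, hij, Matrix.diagonal_apply_eq, hdm j,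
              if_neg hjk, if_pos hjS]
            ring
          · rw [if_neg hij, if_neg hik, Matrix.diagonal_apply_ne _ hij]
            ring
        · rw [if_neg hjS]
          by_cases hij : i = j
          · rw [if_pos hij, hij, Matrix.diagonal_apply_eq, hdm j, if_neg hjk,
              if_neg hjS]
          · rw [if_neg hij, Matrix.diagonal_apply_ne _ hij]
  have hprod : |(Matrix.diagonal d).det| = |∑ l ∈ S, f l| := by
    rw [Matrix.det_diagonal, Finset.abs_prod,
      ← Finset.mul_prod_erase Finset.univ _ (Finset.mem_univ k)]
    have h1 : ∀ m ∈ Finset.univ.erase k, |d m| = 1 := by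
      intro m hm
      have hmk := (Finset.mem_erase.mp hm).1
      rw [hd]
      show |if m = k then ∑ l ∈ S, f l else if m ∈ S then σ m else 1| = 1
      rw [if_neg hmk]
      by_cases hmS : m ∈ S
      · rw [if_pos hmS]; exact hσabs m
      · rw [if_neg hmS]; simp
    rw [Finset.prod_congr rfl h1, Finset.prod_const_one, mul_one, hd]
    show |if k = k then ∑ l ∈ S, f l else _| = _
    rw [if_pos rfl]
  have hAdet : |A.det| = |∑ l ∈ S, f l| := by
    have h1 : (1 + E).det * A.det * (1 + F).det = (Matrix.diagonal d).det := by
      rw [← Matrix.det_mul, ← Matrix.det_mul, ← hB0, hdiag]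
    have := congrArg abs h1
    rw [abs_mul, abs_mul, habs E hEE, habs F hFF, one_mul, mul_one, hprod] at this
    exact this
  rw [← hAdet, hA0]
  exact hmod g

end Aux

/-- If `[I_r | D_r | f]` is `Δ`-modular, then `f` is an integer linear combination of at most
`Δ` columns of `[I_r | D_r]`, i.e. of vectors of the form `eᵢ` or `eᵢ − eⱼ`. -/
theorem spanned_by_delta_columns_of_deltaModular (Δ : ℕ) (hΔ : 1 ≤ Δ) (r : ℕ) (hr : 1 ≤ r)
    (f : Fin r → ℤ)
    (hmod : ∀ g : Fin r → (Fin r ⊕ {p : Fin r × Fin r // p.1 < p.2} ⊕ Unit),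
      |((cliqueExtMatrix r f).submatrix id g).det| ≤ (Δ : ℤ)) :
    ∃ (s : Finset (Fin r → ℤ)) (c : (Fin r → ℤ) → ℤ),
      s.card ≤ Δ ∧
      (∀ v ∈ s, (∃ i : Fin r, v = Pi.single i 1) ∨
        (∃ i j : Fin r, i < j ∧ v = Pi.single i 1 - Pi.single j 1)) ∧
      f = ∑ v ∈ s, c v • v := by
  have hpos : posSum f ≤ Δ := by
    have h1 : (posSum f : ℤ) = ∑ i ∈ Finset.univ.filter (fun i => 0 < f i), f i := by
      rw [Finset.sum_filter, posSum]
      push_cast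
      refine Finset.sum_congr rfl fun m _ => ?_
      split_ifs with h <;> omega
    have h2 := subset_sum_bound Δ r f hmod (Finset.univ.filter (fun i => 0 < f i))
    rw [← h1, abs_of_nonneg (by positivity)] at h2
    exact_mod_cast h2
  have hneg : negSum f ≤ Δ := by
    have h1 : (negSum f : ℤ) = ∑ i ∈ Finset.univ.filter (fun i => f i < 0), (-f i) := by
      rw [Finset.sum_filter, negSum]
      push_cast
      refine Finset.sum_congr rfl fun m _ => ?_
      split_ifs with h <;> omega
    have h2 := subset_sum_bound Δ r f hmod (Finset.univ.filter (fun i => f i < 0))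
    rw [← abs_neg, ← Finset.sum_neg_distrib] at h2
    rw [← h1, abs_of_nonneg (by positivity)] at h2
    exact_mod_cast h2
  obtain ⟨L, hL, hform, hsum⟩ := decomp_list Δ f hpos hneg
  obtain ⟨s, c, hcard, hmem, hsum2⟩ := list_to_finset L hform
  exact ⟨s, c, le_trans hcard hL, hmem, hsum.trans hsum2⟩
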